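/- Let s ≥ 1 and let f be a contiguous subword of the word (yyxx)^s in the free monoid on {x,y}. If a and b are words in the free monoid on {x,y} such that the images of the words a·b and f in the algebra F are equal, then a is a prefix (left subword) of f. -/

import Mathlib

open FreeAlgebra

noncomputable section

/-- The defining relations `x³ = yxy`, `y³ = xyx` of the algebra `F`
(with `x = ι k 0`, `y = ι k 1`). -/
inductive FRel (k : Type*) [CommRing k] :
    FreeAlgebra k (Fin 2) → FreeAlgebra k (Fin 2) → Prop
  | rel1 : FRel k (ι k 0 * ι k 0 * ι k 0) (ι k 1 * ι k 0 * ι k 1)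
  | rel2 : FRel k (ι k 1 * ι k 1 * ι k 1) (ι k 0 * ι k 1 * ι k 0)

/-- The algebra `F = k⟨x,y⟩/(x³ − yxy, y³ − xyx)`. -/
abbrev FAlg (k : Type*) [CommRing k] : Type _ := RingQuot (FRel k)

/-- The generator `x` of `F`. -/
def FAlg.x (k : Type*) [CommRing k] : FAlg k :=
  RingQuot.mkAlgHom k (FRel k) (ι k 0)

/-- The generator `y` of `F`. -/
def FAlg.y (k : Type*) [CommRing k] : FAlg k :=
  RingQuot.mkAlgHom k (FRel k) (ι k 1)

/-- The image in `F` of a word in the free monoid on `{x, y}` (`x = 0`, `y = 1`). -/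
def FAlg.wordVal (k : Type*) [CommRing k] : FreeMonoid (Fin 2) →* FAlg k :=
  FreeMonoid.lift fun i => RingQuot.mkAlgHom k (FRel k) (ι k i)

/-! ### Auxiliary development -/

open FreeMonoid in
/-- The monoid-level relator pairs. -/
def Frel : FreeMonoid (Fin 2) → FreeMonoid (Fin 2) → Prop := fun u v =>
  (u = of 0 * of 0 * of 0 ∧ v = of 1 * of 0 * of 1) ∨
  (u = of 1 * of 1 * of 1 ∧ v = of 0 * of 1 * of 0)

/-- The four "forbidden" factors: the sides of the relations. -/
def badWords : List (List (Fin 2)) := [[0,0,0], [1,0,1], [1,1,1], [0,1,0]]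

/-- A word is good if it contains none of the forbidden factors. -/
def Good (w : FreeMonoid (Fin 2)) : Prop := ∀ l ∈ badWords, ¬ l <:+: w.toList

lemma good_mul_left {u v : FreeMonoid (Fin 2)} (h : Good (u * v)) : Good u :=
  fun l hl hinf => h l hl (hinf.trans (List.prefix_append u.toList v.toList).isInfix)

lemma good_mul_right {u v : FreeMonoid (Fin 2)} (h : Good (u * v)) : Good v :=
  fun l hl hinf => h l hl (hinf.trans (List.suffix_append u.toList v.toList).isInfix)

/-- A good word is alone in its congruence class. -/
lemma rigid {u v : FreeMonoid (Fin 2)} (h : ConGen.Rel Frel u v) :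
    Good u ∨ Good v → u = v := by
  induction h with
  | of x y hxy =>
    rintro (hg | hg) <;> exfalso <;> rcases hxy with ⟨h1, h2⟩ | ⟨h1, h2⟩ <;> subst h1 <;> subst h2
    · exact hg [0,0,0] (by simp [badWords]) List.infix_rfl
    · exact hg [1,1,1] (by simp [badWords]) List.infix_rfl
    · exact hg [1,0,1] (by simp [badWords]) List.infix_rfl
    · exact hg [0,1,0] (by simp [badWords]) List.infix_rfl
  | refl x => intro _; rfl
  | symm _ ih => intro hg; exact (ih hg.symm).symm
  | trans h1 h2 ih1 ih2 =>
    rintro (hg | hg)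
    · have e1 := ih1 (Or.inl hg); subst e1; exact ih2 (Or.inl hg)
    · have e2 := ih2 (Or.inr hg); subst e2; exact ih1 (Or.inr hg)
  | mul h1 h2 ih1 ih2 =>
    rintro (hg | hg)
    · rw [ih1 (Or.inl (good_mul_left hg)), ih2 (Or.inl (good_mul_right hg))]
    · rw [ih1 (Or.inr (good_mul_left hg)), ih2 (Or.inr (good_mul_right hg))]

/-- The word `(yyxx)^s`. -/
def W (s : ℕ) : FreeMonoid (Fin 2) :=
  (FreeMonoid.of 1 * FreeMonoid.of 1 * FreeMonoid.of 0 * FreeMonoid.of 0) ^ s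

lemma W_succ (n : ℕ) : (W (n+1)).toList = (W n).toList ++ [1,1,0,0] := by
  have : W (n+1) = W n * (FreeMonoid.of 1 * FreeMonoid.of 1 * FreeMonoid.of 0 * FreeMonoid.of 0) :=
    pow_succ _ _
  rw [this, FreeMonoid.toList_mul]; rfl

lemma W_length (s : ℕ) : (W s).toList.length = 4 * s := by
  induction s with
  | zero => rfl
  | succ n ih => rw [W_succ, List.length_append, ih]; rfl

lemma W_get (s : ℕ) : ∀ i (h : i < (W s).toList.length),
    (W s).toList[i] = if i % 4 < 2 then (1 : Fin 2) else 0 := by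
  induction s with
  | zero => intro i h; rw [W_length] at h; omega
  | succ n ih =>
    intro i h
    have hlen := W_length n
    rw [List.getElem_of_eq (W_succ n)]
    by_cases hi : i < (W n).toList.length
    · rw [List.getElem_append_left hi]; exact ih i hi
    · rw [List.getElem_append_right (le_of_not_gt hi)]
      have hlen2 : i < (W n).toList.length + 4 := by
        have := W_length (n+1); rw [this] at h; omega
      set j := i - (W n).toList.length with hj
      have hj4 : j < 4 := by omega
      have hmod : i % 4 = j := by omega
      rw [hmod]
      interval_cases j <;> simp [← hj]

/-- `(yyxx)^s` contains no forbidden factor. -/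
lemma W_good (s : ℕ) : Good (W s) := by
  intro l hl hinf
  obtain ⟨p, q, hpq⟩ := hinf
  have hget : ∀ i (hi : i < l.length),
      l[i] = if (p.length + i) % 4 < 2 then (1 : Fin 2) else 0 := by
    intro i hi
    have hlt : p.length + i < (W s).toList.length := by
      rw [← hpq]; simp; omega
    rw [← W_get s (p.length + i) hlt, List.getElem_of_eq hpq.symm hlt,
      List.getElem_of_eq (List.append_assoc p l q) (by rw [hpq]; exact hlt),
      List.getElem_append_right (by omega)]
    simp [List.getElem_append_left hi]
  simp only [badWords, List.mem_cons, List.not_mem_nil, or_false] at hl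
  rcases hl with h | h | h | h <;> subst h <;>
  · have e0 := hget 0 (by norm_num)
    have e1 := hget 1 (by norm_num)
    have e2 := hget 2 (by norm_num)
    norm_num at e0 e1 e2
    omega

/-- The monoid presented by the relations. -/
abbrev Mq : Type := (conGen Frel).Quotient

/-- The map from the free algebra to the monoid algebra of `Mq`. -/
def ψ (k : Type*) [CommRing k] :
    FreeAlgebra k (Fin 2) →ₐ[k] MonoidAlgebra k Mq :=
  FreeAlgebra.lift k fun i => MonoidAlgebra.of k Mq ((conGen Frel).mk' (FreeMonoid.of i))

lemma ψ_rel (k : Type*) [CommRing k] {u v : FreeAlgebra k (Fin 2)} (h : FRel k u v) :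
    ψ k u = ψ k v := by
  have key : ∀ a b : FreeMonoid (Fin 2), ConGen.Rel Frel a b →
      (MonoidAlgebra.of k Mq).comp ((conGen Frel).mk') a
        = (MonoidAlgebra.of k Mq).comp ((conGen Frel).mk') b := by
    intro a b hab
    simp only [MonoidHom.comp_apply]
    congr 1
    exact ((conGen Frel).eq).mpr hab
  cases h with
  | rel1 =>
    have := key (.of 0 * .of 0 * .of 0) (.of 1 * .of 0 * .of 1)
      (ConGen.Rel.of _ _ (Or.inl ⟨rfl, rfl⟩))
    simpa [ψ, lift_ι_apply, map_mul] using this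
  | rel2 =>
    have := key (.of 1 * .of 1 * .of 1) (.of 0 * .of 1 * .of 0)
      (ConGen.Rel.of _ _ (Or.inr ⟨rfl, rfl⟩))
    simpa [ψ, lift_ι_apply, map_mul] using this

/-- The induced map on `FAlg`. -/
def φ (k : Type*) [CommRing k] : FAlg k →ₐ[k] MonoidAlgebra k Mq :=
  RingQuot.liftAlgHom k ⟨ψ k, fun {_ _} h => ψ_rel k h⟩

lemma φ_wordVal (k : Type*) [CommRing k] (w : FreeMonoid (Fin 2)) :
    φ k (FAlg.wordVal k w) = MonoidAlgebra.of k Mq ((conGen Frel).mk' w) := by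
  have : ((φ k : FAlg k →+* MonoidAlgebra k Mq) : FAlg k →* MonoidAlgebra k Mq).comp
      (FAlg.wordVal k) = (MonoidAlgebra.of k Mq).comp ((conGen Frel).mk') := by
    apply FreeMonoid.hom_eq
    intro i
    simp [FAlg.wordVal, ψ, RingQuot.liftAlgHom_mkAlgHom_apply, lift_ι_apply, φ]
  exact DFunLike.congr_fun this w

/-- let `s ≥ 1` and let `f` be a contiguous subword of `(yyxx)^s` in the
free monoid on `{x,y}`.  If `a, b` are words such that the images of `a·b` and `f` in `F`
are equal, then `a` is a prefix (left subword) of `f`. -/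
theorem FAlg_left_subword (k : Type*) [Field k] [IsAlgClosed k] [CharZero k]
    (s : ℕ) (hs : 1 ≤ s) (f a b : FreeMonoid (Fin 2))
    (hf : f.toList <:+:
      ((FreeMonoid.of (1 : Fin 2) * FreeMonoid.of 1 * FreeMonoid.of 0 * FreeMonoid.of 0)
          ^ s).toList)
    (hab : FAlg.wordVal k (a * b) = FAlg.wordVal k f) :
    a.toList <+: f.toList := by
  have hGoodf : Good f := fun l hl hinf => W_good s l hl (hinf.trans hf)
  have h1 : MonoidAlgebra.of k Mq ((conGen Frel).mk' (a * b))
      = MonoidAlgebra.of k Mq ((conGen Frel).mk' f) := by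
    rw [← φ_wordVal, ← φ_wordVal, hab]
  have h2 : (conGen Frel).mk' (a * b) = (conGen Frel).mk' f :=
    MonoidAlgebra.of_injective h1
  have h3 : ConGen.Rel Frel (a * b) f := ((conGen Frel).eq).mp h2
  have h4 : a * b = f := rigid h3 (Or.inr hGoodf)
  exact ⟨b.toList, by rw [← h4]; rfl⟩

end
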